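/- arXiv:2012.00268 — 2 statements merged into one kernel-verified Lean document; each statement's English description precedes it below -/
import Mathlib

section
/- Let m_B, m_E be positive integers, K_{B,1}, K_{B,2}, K_{E,1}, K_{E,2} > 0, ρ_{B,1}, ρ_{B,2}, ρ_{E,1}, ρ_{E,2} > 0 real, and p_B, p_E ∈ [0,1]. Let f_B^{ARS} be the ARS PDF with parameters (p_B, m_B, K_{B,1}, K_{B,2}, ρ_{B,1}, ρ_{B,2}) and F_E^{ARS} the ARS CDF with parameters (p_E, m_E, K_{E,1}, K_{E,2}, ρ_{E,1}, ρ_{E,2}). Then the probability of non-zero secrecy capacity P_nz = ∫₀^∞ F_E^{ARS}(γ)·f_B^{ARS}(γ) dγ satisfies P_nz = Σ_{i=1}^{2} Σ_{j=1}^{2} Q_{B,i}·Q_{E,j}·D_{i,j}, where Q_{ℓ,1} = p_ℓ, Q_{ℓ,2} = 1 − p_ℓ, and D_{i,j} = Σ_{l=0}^{m_E−1} Σ_{n=0}^{m_B−1} B_l(m_E,K_{E,j})·B_n(m_B,K_{B,i})·( 1 − Σ_{k=0}^{m_E−l−1} (k + m_B − n − 1)! / [ ρ_{B,i}^{m_B−n}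 · ρ_{E,j}^k · (m_B−n−1)! · k! ] · (1/ρ_{B,i} + 1/ρ_{E,j})^{−(k+m_B−n)} ). -/
open MeasureTheory Filter Finset Real

/-- Coefficients `B_n(m,K)` of the integer-parameter Rician shadowed model. -/
noncomputable def Bcoef (m : ℕ) (K : ℝ) (n : ℕ) : ℝ :=
  ((m - 1).choose n : ℝ) * ((m : ℝ) / (K + m)) ^ n * (K / (K + m)) ^ (m - 1 - n)

/-- Integer-parameter Rician shadowed PDF with parameters `(m, K, ρ)`. -/
noncomputable def rsPDF (m : ℕ) (K ρ : ℝ) (γ : ℝ) : ℝ :=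
  ∑ n ∈ Finset.range m,
    Bcoef m K n * γ ^ (m - n - 1) * Real.exp (-γ / ρ) /
      (ρ ^ (m - n) * ((m - n - 1).factorial : ℝ))

/-- Integer-parameter Rician shadowed CDF with parameters `(m, K, ρ)`. -/
noncomputable def rsCDF (m : ℕ) (K ρ : ℝ) (γ : ℝ) : ℝ :=
  ∑ j ∈ Finset.range m,
    Bcoef m K j *
      (1 - Real.exp (-γ / ρ) *
        ∑ k ∈ Finset.range (m - j), γ ^ k / (ρ ^ k * (k.factorial : ℝ)))

/-- Alternate Rician Shadowed (ARS) PDF with parameters `(p, m, K₁, K₂, ρ₁, ρ₂)`. -/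
noncomputable def arsPDF (p : ℝ) (m : ℕ) (K₁ K₂ ρ₁ ρ₂ : ℝ) (γ : ℝ) : ℝ :=
  p * rsPDF m K₁ ρ₁ γ + (1 - p) * rsPDF m K₂ ρ₂ γ

/-- Alternate Rician Shadowed (ARS) CDF with parameters `(p, m, K₁, K₂, ρ₁, ρ₂)`. -/
noncomputable def arsCDF (p : ℝ) (m : ℕ) (K₁ K₂ ρ₁ ρ₂ : ℝ) (γ : ℝ) : ℝ :=
  p * rsCDF m K₁ ρ₁ γ + (1 - p) * rsCDF m K₂ ρ₂ γ


section ARSHelpers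
open Set Asymptotics


lemma integrableOn_pow_mul_exp (p : ℕ) {r : ℝ} (hr : 0 < r) :
    IntegrableOn (fun t : ℝ => t ^ p * Real.exp (-(r * t))) (Set.Ioi 0) := by
  refine integrable_of_isBigO_exp_neg (half_pos hr) ?_ ?_
  · exact (Continuous.continuousOn (by continuity))
  · have h0 : Tendsto (fun t : ℝ => t ^ p * Real.exp (-(r / 2 * t))) atTop (nhds 0) := by
      simpa [Real.rpow_natCast] using
        tendsto_rpow_mul_exp_neg_mul_atTop_nhds_zero (p : ℝ) (r / 2) (half_pos hr)
    have h1 := (h0.isBigO_one ℝ).mul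
      (isBigO_refl (fun t : ℝ => Real.exp (-(r / 2) * t)) atTop)
    refine h1.congr' ?_ ?_
    · filter_upwards with t
      rw [mul_assoc, ← Real.exp_add]
      congr 1
      ring
    · filter_upwards with t
      simp

lemma integral_pow_mul_exp (p : ℕ) {r : ℝ} (hr : 0 < r) :
    ∫ t in Set.Ioi (0 : ℝ), t ^ p * Real.exp (-(r * t)) = (p.factorial : ℝ) / r ^ (p + 1) := by
  have h := integral_rpow_mul_exp_neg_mul_Ioi (a := (p : ℝ) + 1) (by positivity) hr
  rw [MeasureTheory.setIntegral_congr_fun measurableSet_Ioi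
    (g := fun t : ℝ => t ^ ((p : ℝ) + 1 - 1) * Real.exp (-(r * t)))
    (fun t _ => by beta_reduce; rw [add_sub_cancel_right, Real.rpow_natCast]),
    h, Real.Gamma_nat_eq_factorial,
    show ((p : ℝ) + 1) = ((p + 1 : ℕ) : ℝ) by push_cast; ring, Real.rpow_natCast]
  rw [one_div, inv_pow]
  ring


lemma ars_prod_eq (mB mE : ℕ) (KB KE ρB ρE : ℝ) :
    (fun γ : ℝ => rsCDF mE KE ρE γ * rsPDF mB KB ρB γ) =
    fun γ : ℝ => ∑ l ∈ Finset.range mE, ∑ n ∈ Finset.range mB,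
      ((Bcoef mE KE l * Bcoef mB KB n / (ρB ^ (mB - n) * ((mB - n - 1).factorial : ℝ))) *
          (γ ^ (mB - n - 1) * Real.exp (-((1 / ρB) * γ)))
        - ∑ k ∈ Finset.range (mE - l),
            (Bcoef mE KE l * Bcoef mB KB n /
                (ρB ^ (mB - n) * ((mB - n - 1).factorial : ℝ) * ρE ^ k * (k.factorial : ℝ))) *
              (γ ^ (k + (mB - n - 1)) * Real.exp (-((1 / ρB + 1 / ρE) * γ)))) := by
  funext γ
  rw [rsCDF, rsPDF, Finset.sum_mul_sum]
  refine Finset.sum_congr rfl fun l _ => Finset.sum_congr rfl fun n _ => ?_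
  have h2 : Bcoef mE KE l * (Real.exp (-γ / ρE) *
      ∑ k ∈ Finset.range (mE - l), γ ^ k / (ρE ^ k * (k.factorial : ℝ))) *
      (Bcoef mB KB n * γ ^ (mB - n - 1) * Real.exp (-γ / ρB) /
        (ρB ^ (mB - n) * ((mB - n - 1).factorial : ℝ))) =
      ∑ k ∈ Finset.range (mE - l),
        (Bcoef mE KE l * Bcoef mB KB n /
            (ρB ^ (mB - n) * ((mB - n - 1).factorial : ℝ) * ρE ^ k * (k.factorial : ℝ))) *
          (γ ^ (k + (mB - n - 1)) * Real.exp (-((1 / ρB + 1 / ρE) * γ))) := by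
    rw [Finset.mul_sum, Finset.mul_sum, Finset.sum_mul]
    refine Finset.sum_congr rfl fun k _ => ?_
    rw [pow_add, show Real.exp (-((1 / ρB + 1 / ρE) * γ)) =
        Real.exp (-γ / ρE) * Real.exp (-γ / ρB) by rw [← Real.exp_add]; congr 1; ring]
    ring
  rw [mul_sub, sub_mul, h2, mul_one]
  congr 1
  rw [show Real.exp (-((1 / ρB) * γ)) = Real.exp (-γ / ρB) by congr 1; ring]
  ring

lemma integrableOn_core (mB mE : ℕ) (KB KE ρB ρE : ℝ) (hρB : 0 < ρB) (hρE : 0 < ρE) :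
    IntegrableOn (fun γ : ℝ => rsCDF mE KE ρE γ * rsPDF mB KB ρB γ) (Set.Ioi 0) := by
  rw [ars_prod_eq]
  refine integrable_finset_sum _ fun l _ => integrable_finset_sum _ fun n _ => ?_
  refine Integrable.sub (Integrable.const_mul ?_ _)
    (integrable_finset_sum _ fun k _ => Integrable.const_mul ?_ _)
  · exact integrableOn_pow_mul_exp _ (by positivity)
  · exact integrableOn_pow_mul_exp _ (by positivity)

lemma core_integral (mB mE : ℕ) (KB KE ρB ρE : ℝ) (hρB : 0 < ρB) (hρE : 0 < ρE) :
    ∫ γ in Set.Ioi (0 : ℝ), rsCDF mE KE ρE γ * rsPDF mB KB ρB γ =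
      ∑ l ∈ Finset.range mE, ∑ n ∈ Finset.range mB,
        Bcoef mE KE l * Bcoef mB KB n *
          (1 - ∑ k ∈ Finset.range (mE - l),
            ((k + mB - n - 1).factorial : ℝ) /
                (ρB ^ (mB - n) * ρE ^ k * ((mB - n - 1).factorial : ℝ) * (k.factorial : ℝ)) *
              (1 / ρB + 1 / ρE) ^ (-((k + mB - n : ℕ) : ℤ))) := by
  have hs : (0 : ℝ) < 1 / ρB + 1 / ρE := by positivity
  have hI : ∀ (c : ℝ) (p : ℕ) (r : ℝ), 0 < r →
      Integrable (fun γ : ℝ => c * (γ ^ p * Real.exp (-(r * γ))))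
        (volume.restrict (Set.Ioi 0)) :=
    fun c p r hr => (integrableOn_pow_mul_exp p hr).const_mul c
  have h2 : ∀ l n : ℕ, Integrable (fun γ : ℝ =>
      (Bcoef mE KE l * Bcoef mB KB n / (ρB ^ (mB - n) * ((mB - n - 1).factorial : ℝ))) *
          (γ ^ (mB - n - 1) * Real.exp (-((1 / ρB) * γ)))
        - ∑ k ∈ Finset.range (mE - l),
            (Bcoef mE KE l * Bcoef mB KB n /
                (ρB ^ (mB - n) * ((mB - n - 1).factorial : ℝ) * ρE ^ k * (k.factorial : ℝ))) *
              (γ ^ (k + (mB - n - 1)) * Real.exp (-((1 / ρB + 1 / ρE) * γ))))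
      (volume.restrict (Set.Ioi 0)) := fun l n =>
    (hI _ _ _ (by positivity)).sub (integrable_finset_sum _ fun k _ => hI _ _ _ hs)
  rw [ars_prod_eq,
    integral_finset_sum _ fun l _ => integrable_finset_sum _ fun n _ => h2 l n]
  refine Finset.sum_congr rfl fun l hl => ?_
  rw [integral_finset_sum _ fun n _ => h2 l n]
  refine Finset.sum_congr rfl fun n hn => ?_
  have hn' : n < mB := Finset.mem_range.mp hn
  rw [integral_sub (hI _ _ _ (by positivity)) (integrable_finset_sum _ fun k _ => hI _ _ _ hs),
    integral_finset_sum _ fun k _ => hI _ _ _ hs]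
  simp only [MeasureTheory.integral_const_mul,
    integral_pow_mul_exp _ (show (0:ℝ) < 1 / ρB by positivity),
    integral_pow_mul_exp _ hs]
  rw [mul_sub, mul_one, Finset.mul_sum]
  congr 1
  · rw [show mB - n - 1 + 1 = mB - n from by omega]
    have h1 : (ρB : ℝ) ≠ 0 := by positivity
    have h2 : (((mB - n - 1).factorial : ℕ) : ℝ) ≠ 0 := by
      exact_mod_cast (mB - n - 1).factorial_ne_zero
    field_simp
    rw [mul_assoc, ← mul_pow, mul_one_div_cancel h1, one_pow, mul_one]
  · refine Finset.sum_congr rfl fun k _ => ?_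
    rw [show k + mB - n - 1 = k + (mB - n - 1) from by omega,
      show k + mB - n = k + (mB - n - 1) + 1 from by omega,
      zpow_neg, zpow_natCast]
    have h1 : (ρB : ℝ) ≠ 0 := by positivity
    have h2 : (ρE : ℝ) ≠ 0 := by positivity
    have h3 : (((mB - n - 1).factorial : ℕ) : ℝ) ≠ 0 := by
      exact_mod_cast (mB - n - 1).factorial_ne_zero
    have h4 : ((k.factorial : ℕ) : ℝ) ≠ 0 := by exact_mod_cast k.factorial_ne_zero
    have h5 : (1 / ρB + 1 / ρE : ℝ) ≠ 0 := ne_of_gt hs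
    ring

end ARSHelpers

/-- Closed-form probability of non-zero secrecy capacity over ARS fading channels
(integer `m`): `P_nz = Σᵢ Σⱼ Q_{B,i} Q_{E,j} D_{i,j}`. -/
theorem pnz_closed_form (mB mE : ℕ) (hmB : 0 < mB) (hmE : 0 < mE)
    (KB1 KB2 KE1 KE2 : ℝ) (hKB1 : 0 < KB1) (hKB2 : 0 < KB2)
    (hKE1 : 0 < KE1) (hKE2 : 0 < KE2)
    (ρB1 ρB2 ρE1 ρE2 : ℝ) (hρB1 : 0 < ρB1) (hρB2 : 0 < ρB2)
    (hρE1 : 0 < ρE1) (hρE2 : 0 < ρE2)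
    (pB pE : ℝ) (hpB : pB ∈ Set.Icc (0 : ℝ) 1) (hpE : pE ∈ Set.Icc (0 : ℝ) 1) :
    ∫ γ in Set.Ioi (0 : ℝ),
        arsCDF pE mE KE1 KE2 ρE1 ρE2 γ * arsPDF pB mB KB1 KB2 ρB1 ρB2 γ =
      ∑ i : Fin 2, ∑ j : Fin 2,
        (![pB, 1 - pB] i) * (![pE, 1 - pE] j) *
          (∑ l ∈ Finset.range mE, ∑ n ∈ Finset.range mB,
            Bcoef mE (![KE1, KE2] j) l * Bcoef mB (![KB1, KB2] i) n *
              (1 - ∑ k ∈ Finset.range (mE - l),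
                ((k + mB - n - 1).factorial : ℝ) /
                    ((![ρB1, ρB2] i) ^ (mB - n) * (![ρE1, ρE2] j) ^ k *
                      ((mB - n - 1).factorial : ℝ) * (k.factorial : ℝ)) *
                  (1 / ![ρB1, ρB2] i + 1 / ![ρE1, ρE2] j) ^
                    (-((k + mB - n : ℕ) : ℤ)))) := by
  have hρB : ∀ i : Fin 2, 0 < ![ρB1, ρB2] i := fun i => by
    fin_cases i <;> simpa
  have hρE : ∀ j : Fin 2, 0 < ![ρE1, ρE2] j := fun j => by
    fin_cases j <;> simpa
  have e : (fun γ : ℝ =>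
      arsCDF pE mE KE1 KE2 ρE1 ρE2 γ * arsPDF pB mB KB1 KB2 ρB1 ρB2 γ) =
      fun γ : ℝ => ∑ i : Fin 2, ∑ j : Fin 2,
        (![pB, 1 - pB] i * ![pE, 1 - pE] j) *
          (rsCDF mE (![KE1, KE2] j) (![ρE1, ρE2] j) γ *
            rsPDF mB (![KB1, KB2] i) (![ρB1, ρB2] i) γ) := by
    funext γ
    simp only [arsCDF, arsPDF, Fin.sum_univ_two, Matrix.cons_val_zero, Matrix.cons_val_one, Matrix.head_cons]
    ring
  rw [e, integral_finset_sum _ fun i _ => integrable_finset_sum _ fun j _ =>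
    (integrableOn_core mB mE _ _ _ _ (hρB i) (hρE j)).const_mul _]
  refine Finset.sum_congr rfl fun i _ => ?_
  rw [integral_finset_sum _ fun j _ =>
    (integrableOn_core mB mE _ _ _ _ (hρB i) (hρE j)).const_mul _]
  refine Finset.sum_congr rfl fun j _ => ?_
  rw [MeasureTheory.integral_const_mul, core_integral mB mE _ _ _ _ (hρB i) (hρE j)]
end

section
/- Let m_B, m_E be positive integers, K_{B,1}, K_{B,2}, K_{E,1}, K_{E,2} > 0, ρ_{E,1}, ρ_{E,2} > 0, c₁, c₂ > 0 real, and p_B, p_E ∈ [0,1]. For s > 0, let f_B^{(s)} be the ARS PDF with parameters (p_B, m_B, K_{B,1}, K_{B,2}, c₁·s, c₂·s) and let F_E^{ARS} be the ARS CDF with parameters (p_E, m_E, K_{E,1}, K_{E,2}, ρ_{E,1}, ρ_{E,2}). Then the probability of non-zero secrecy capacity P_nz(s) = ∫₀^∞ F_E^{ARS}(γ)·f_B^{(s)}(γ) dγ satisfies lim_{s→∞} P_nz(s) = 1. -/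
open MeasureTheory Filter Finset Real
open Set

lemma Bcoef_nonneg {m : ℕ} {K : ℝ} (hK : 0 < K) (n : ℕ) : 0 ≤ Bcoef m K n := by
  have h : (0:ℝ) < K + m := by positivity
  unfold Bcoef; positivity

lemma Bcoef_sum {m : ℕ} (hm : 0 < m) {K : ℝ} (hK : 0 < K) :
    ∑ n ∈ Finset.range m, Bcoef m K n = 1 := by
  have h : (0:ℝ) < K + m := by positivity
  have key := add_pow ((m:ℝ)/(K+m)) (K/(K+m)) (m-1)
  have h1 : ((m:ℝ)/(K+m) + K/(K+m)) = 1 := by field_simp; ring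
  rw [h1, one_pow] at key
  rw [show m - 1 + 1 = m from by omega] at key
  rw [key]
  exact Finset.sum_congr rfl fun n hn => by unfold Bcoef; ring

lemma integral_pow_exp {ρ : ℝ} (hρ : 0 < ρ) (a : ℕ) :
    ∫ x in Set.Ioi (0:ℝ), x ^ a * Real.exp (-x/ρ) = ρ ^ (a+1) * (a.factorial : ℝ) := by
  have h := Real.integral_rpow_mul_exp_neg_mul_Ioi (a := (a:ℝ)+1) (r := 1/ρ) (by positivity) (by positivity)
  rw [show (1:ℝ)/(1/ρ) = ρ by field_simp] at h
  have h2 : ∫ t in Set.Ioi (0:ℝ), t ^ (((a:ℝ)+1)-1) * Real.exp (-(1/ρ * t))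
      = ∫ x in Set.Ioi (0:ℝ), x ^ a * Real.exp (-x/ρ) := by
    refine setIntegral_congr_fun measurableSet_Ioi fun x hx => ?_
    rw [Set.mem_Ioi] at hx
    rw [show ((a:ℝ)+1)-1 = (a:ℝ) by ring, Real.rpow_natCast]
    congr 1
    ring
  rw [h2] at h
  rw [h, Real.Gamma_nat_eq_factorial,
    show ((a:ℝ)+1) = ((a+1:ℕ):ℝ) by push_cast; ring, Real.rpow_natCast]

lemma integrableOn_pow_exp {ρ : ℝ} (hρ : 0 < ρ) (a : ℕ) :
    IntegrableOn (fun x : ℝ => x ^ a * Real.exp (-x/ρ)) (Set.Ioi 0) := by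
  have h := integrableOn_rpow_mul_exp_neg_mul_rpow (s := (a:ℝ)) (p := 1) (b := 1/ρ)
    (by exact lt_of_lt_of_le neg_one_lt_zero (Nat.cast_nonneg a)) one_pos (by positivity)
  refine h.congr_fun (fun x hx => ?_) measurableSet_Ioi
  rw [Set.mem_Ioi] at hx
  beta_reduce
  rw [Real.rpow_natCast, Real.rpow_one]
  congr 1
  ring

lemma rsPDF_nonneg {m : ℕ} {K ρ : ℝ} (hK : 0 < K) (hρ : 0 < ρ) {γ : ℝ} (hγ : 0 ≤ γ) :
    0 ≤ rsPDF m K ρ γ := by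
  refine Finset.sum_nonneg fun n hn => ?_
  have hB := Bcoef_nonneg (m := m) hK n
  positivity

lemma integrableOn_rsPDF_term {m : ℕ} {K ρ : ℝ} (hρ : 0 < ρ) (n : ℕ) :
    IntegrableOn (fun γ : ℝ => Bcoef m K n * γ ^ (m - n - 1) * Real.exp (-γ / ρ) /
      (ρ ^ (m - n) * ((m - n - 1).factorial : ℝ))) (Set.Ioi 0) := by
  have h := ((integrableOn_pow_exp hρ (m - n - 1)).const_mul
    (Bcoef m K n / (ρ ^ (m - n) * ((m - n - 1).factorial : ℝ))))
  refine MeasureTheory.IntegrableOn.congr_fun h (fun x _ => ?_) measurableSet_Ioi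
  ring

lemma integrableOn_rsPDF {m : ℕ} {K ρ : ℝ} (hρ : 0 < ρ) :
    IntegrableOn (rsPDF m K ρ) (Set.Ioi 0) := by
  unfold rsPDF
  exact integrable_finset_sum _ fun n _ => integrableOn_rsPDF_term hρ n

lemma integral_rsPDF {m : ℕ} (hm : 0 < m) {K ρ : ℝ} (hK : 0 < K) (hρ : 0 < ρ) :
    ∫ γ in Set.Ioi (0:ℝ), rsPDF m K ρ γ = 1 := by
  unfold rsPDF
  rw [integral_finset_sum _ fun n _ => integrableOn_rsPDF_term hρ n]
  rw [← Bcoef_sum hm hK]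
  refine Finset.sum_congr rfl fun n hn => ?_
  have hn' : n < m := Finset.mem_range.mp hn
  have hfac : (0:ℝ) < ((m - n - 1).factorial : ℝ) := by positivity
  have heq : ∀ γ : ℝ, Bcoef m K n * γ ^ (m - n - 1) * Real.exp (-γ / ρ) /
      (ρ ^ (m - n) * ((m - n - 1).factorial : ℝ))
      = (Bcoef m K n / (ρ ^ (m - n) * ((m - n - 1).factorial : ℝ)))
        * (γ ^ (m - n - 1) * Real.exp (-γ/ρ)) := fun γ => by ring
  simp_rw [heq]
  rw [MeasureTheory.integral_const_mul, integral_pow_exp hρ, show m - n - 1 + 1 = m - n by omega]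
  field_simp

lemma continuous_rsPDF (m : ℕ) (K ρ : ℝ) : Continuous (rsPDF m K ρ) := by
  unfold rsPDF; fun_prop

lemma continuous_rsCDF (m : ℕ) (K ρ : ℝ) : Continuous (rsCDF m K ρ) := by
  unfold rsCDF; fun_prop

lemma rsCDF_nonneg {m : ℕ} {K ρ : ℝ} (hK : 0 < K) (hρ : 0 < ρ) {γ : ℝ} (hγ : 0 ≤ γ) :
    0 ≤ rsCDF m K ρ γ := by
  refine Finset.sum_nonneg fun j hj => mul_nonneg (Bcoef_nonneg hK j) ?_
  rw [sub_nonneg]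
  have hsum : ∑ k ∈ Finset.range (m - j), γ ^ k / (ρ ^ k * (k.factorial : ℝ))
      = ∑ k ∈ Finset.range (m - j), (γ/ρ) ^ k / (k.factorial : ℝ) := by
    refine Finset.sum_congr rfl fun k _ => ?_
    rw [div_pow]; ring
  rw [hsum]
  calc Real.exp (-γ/ρ) * ∑ k ∈ Finset.range (m - j), (γ/ρ) ^ k / (k.factorial : ℝ)
      ≤ Real.exp (-γ/ρ) * Real.exp (γ/ρ) := by
        refine mul_le_mul_of_nonneg_left ?_ (Real.exp_pos _).le
        exact Real.sum_le_exp_of_nonneg (by positivity) _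
    _ = 1 := by rw [← Real.exp_add]; ring_nf; exact Real.exp_zero

lemma rsCDF_le_one {m : ℕ} (hm : 0 < m) {K ρ : ℝ} (hK : 0 < K) (hρ : 0 < ρ) {γ : ℝ}
    (hγ : 0 ≤ γ) : rsCDF m K ρ γ ≤ 1 := by
  rw [← Bcoef_sum hm hK]
  refine Finset.sum_le_sum fun j hj => ?_
  have h1 : rsCDF m K ρ γ ≤ rsCDF m K ρ γ := le_rfl
  have hB := Bcoef_nonneg (m := m) hK j
  have h2 : (1 : ℝ) - Real.exp (-γ / ρ) *
      ∑ k ∈ Finset.range (m - j), γ ^ k / (ρ ^ k * (k.factorial : ℝ)) ≤ 1 := by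
    have : 0 ≤ Real.exp (-γ / ρ) *
        ∑ k ∈ Finset.range (m - j), γ ^ k / (ρ ^ k * (k.factorial : ℝ)) := by
      refine mul_nonneg (Real.exp_pos _).le (Finset.sum_nonneg fun k _ => by positivity)
    linarith
  calc Bcoef m K j * _ ≤ Bcoef m K j * 1 := mul_le_mul_of_nonneg_left h2 hB
    _ = Bcoef m K j := mul_one _

lemma rsCDF_tendsto_one {m : ℕ} (hm : 0 < m) {K ρ : ℝ} (hK : 0 < K) (hρ : 0 < ρ) :
    Tendsto (rsCDF m K ρ) atTop (nhds 1) := by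
  have hterm : ∀ k : ℕ, Tendsto (fun γ : ℝ => γ ^ k * Real.exp (-γ/ρ)) atTop (nhds 0) := by
    intro k
    have h1 : Tendsto (fun γ : ℝ => γ / ρ) atTop atTop :=
      tendsto_id.atTop_div_const hρ
    have h2 := (Real.tendsto_pow_mul_exp_neg_atTop_nhds_zero k).comp h1
    have h3 := h2.const_mul (ρ ^ k)
    rw [mul_zero] at h3
    refine h3.congr fun γ => ?_
    simp only [Function.comp_apply]
    rw [div_pow]
    field_simp
  have hinner : ∀ j : ℕ, Tendsto (fun γ : ℝ => Real.exp (-γ/ρ) *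
      ∑ k ∈ Finset.range (m - j), γ ^ k / (ρ ^ k * (k.factorial : ℝ))) atTop (nhds 0) := by
    intro j
    have : ∀ γ : ℝ, Real.exp (-γ/ρ) * ∑ k ∈ Finset.range (m - j),
        γ ^ k / (ρ ^ k * (k.factorial : ℝ))
        = ∑ k ∈ Finset.range (m - j), (γ ^ k * Real.exp (-γ/ρ)) / (ρ ^ k * (k.factorial : ℝ)) := by
      intro γ; rw [Finset.mul_sum]; exact Finset.sum_congr rfl fun k _ => by ring
    simp_rw [this]
    have := tendsto_finset_sum (Finset.range (m - j))
      (fun k _ => ((hterm k).div_const (ρ ^ k * (k.factorial : ℝ))))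
    simpa using this
  unfold rsCDF
  have key := tendsto_finset_sum (Finset.range m)
    (fun j (_ : j ∈ Finset.range m) => (((hinner j).const_sub 1).const_mul (Bcoef m K j)))
  simp only [sub_zero, mul_one] at key
  rw [Bcoef_sum hm hK] at key
  exact key

lemma rsPDF_scale {m : ℕ} (K : ℝ) {c s : ℝ} (hc : 0 < c) (hs : 0 < s) (u : ℝ) :
    rsPDF m K (c * s) (s * u) = s⁻¹ * rsPDF m K c u := by
  unfold rsPDF
  rw [Finset.mul_sum]
  refine Finset.sum_congr rfl fun n hn => ?_
  have hn' : n < m := Finset.mem_range.mp hn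
  have harg : -(s*u)/(c*s) = -u/c := by field_simp
  rw [harg]
  set a := m - n - 1 with ha
  rw [show m - n = a + 1 by omega]
  have hfac : (0:ℝ) < (a.factorial : ℝ) := by positivity
  rw [mul_pow s u, mul_pow c s]
  field_simp
  ring

/-- High-SNR limit: the probability of non-zero secrecy capacity tends to 1
as the average SNR of the main channel grows. -/
theorem pnz_tendsto_one (mB mE : ℕ) (hmB : 0 < mB) (hmE : 0 < mE)
    (KB1 KB2 KE1 KE2 : ℝ) (hKB1 : 0 < KB1) (hKB2 : 0 < KB2)
    (hKE1 : 0 < KE1) (hKE2 : 0 < KE2)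
    (ρE1 ρE2 c1 c2 : ℝ) (hρE1 : 0 < ρE1) (hρE2 : 0 < ρE2)
    (hc1 : 0 < c1) (hc2 : 0 < c2)
    (pB pE : ℝ) (hpB : pB ∈ Set.Icc (0 : ℝ) 1) (hpE : pE ∈ Set.Icc (0 : ℝ) 1) :
    Filter.Tendsto
      (fun s : ℝ =>
        ∫ γ in Set.Ioi (0 : ℝ),
          arsCDF pE mE KE1 KE2 ρE1 ρE2 γ *
            arsPDF pB mB KB1 KB2 (c1 * s) (c2 * s) γ)
      Filter.atTop (nhds 1) := by
  obtain ⟨hpB0, hpB1⟩ := hpB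
  obtain ⟨hpE0, hpE1⟩ := hpE
  set F : ℝ → ℝ := fun γ => arsCDF pE mE KE1 KE2 ρE1 ρE2 γ with hFdef
  set g : ℝ → ℝ := fun u => arsPDF pB mB KB1 KB2 c1 c2 u with hgdef
  have hF0 : ∀ γ : ℝ, 0 ≤ γ → 0 ≤ F γ := fun γ hγ => by
    simp only [hFdef, arsCDF]
    have h1 := rsCDF_nonneg (m := mE) hKE1 hρE1 hγ
    have h2 := rsCDF_nonneg (m := mE) hKE2 hρE2 hγ
    have : 0 ≤ 1 - pE := by linarith
    positivity
  have hF1 : ∀ γ : ℝ, 0 ≤ γ → F γ ≤ 1 := fun γ hγ => by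
    simp only [hFdef, arsCDF]
    have h1 := rsCDF_le_one hmE hKE1 hρE1 hγ
    have h2 := rsCDF_le_one hmE hKE2 hρE2 hγ
    nlinarith [rsCDF_nonneg (m := mE) hKE1 hρE1 hγ, rsCDF_nonneg (m := mE) hKE2 hρE2 hγ]
  have hFlim : Tendsto F atTop (nhds 1) := by
    have h1 := (rsCDF_tendsto_one hmE hKE1 hρE1).const_mul pE
    have h2 := (rsCDF_tendsto_one hmE hKE2 hρE2).const_mul (1 - pE)
    have := h1.add h2
    simp only [mul_one] at this
    simpa [hFdef, arsCDF] using this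
  have hFcont : Continuous F := by
    simp only [hFdef, arsCDF]
    exact (continuous_const.mul (continuous_rsCDF mE KE1 ρE1)).add
      (continuous_const.mul (continuous_rsCDF mE KE2 ρE2))
  have hgcont : Continuous g := by
    simp only [hgdef, arsPDF]
    exact (continuous_const.mul (continuous_rsPDF mB KB1 c1)).add
      (continuous_const.mul (continuous_rsPDF mB KB2 c2))
  have hgnn : ∀ u : ℝ, 0 ≤ u → 0 ≤ g u := fun u hu => by
    simp only [hgdef, arsPDF]
    have h1 := rsPDF_nonneg (m := mB) hKB1 hc1 hu
    have h2 := rsPDF_nonneg (m := mB) hKB2 hc2 hu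
    have : 0 ≤ 1 - pB := by linarith
    positivity
  have hgint : IntegrableOn g (Set.Ioi 0) := by
    simp only [hgdef, arsPDF]
    exact ((integrableOn_rsPDF hc1).const_mul pB).add ((integrableOn_rsPDF hc2).const_mul (1 - pB))
  have hgint1 : ∫ u in Set.Ioi (0:ℝ), g u = 1 := by
    simp only [hgdef, arsPDF]
    rw [MeasureTheory.integral_add ((integrableOn_rsPDF hc1).const_mul pB)
      ((integrableOn_rsPDF hc2).const_mul (1 - pB)),
      MeasureTheory.integral_const_mul, MeasureTheory.integral_const_mul,
      integral_rsPDF hmB hKB1 hc1, integral_rsPDF hmB hKB2 hc2]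
    ring
  have hsub : ∀ s : ℝ, 0 < s →
      (∫ γ in Set.Ioi (0:ℝ), F γ * arsPDF pB mB KB1 KB2 (c1 * s) (c2 * s) γ)
        = ∫ u in Set.Ioi (0:ℝ), F (s * u) * g u := by
    intro s hs
    have h := integral_comp_mul_left_Ioi
      (fun γ => F γ * arsPDF pB mB KB1 KB2 (c1 * s) (c2 * s) γ) 0 hs
    rw [mul_zero] at h
    have h2 : ∀ x : ℝ, F (s * x) * arsPDF pB mB KB1 KB2 (c1 * s) (c2 * s) (s * x)
        = s⁻¹ * (F (s * x) * g x) := by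
      intro x
      simp only [hgdef, arsPDF]
      rw [rsPDF_scale KB1 hc1 hs, rsPDF_scale KB2 hc2 hs]
      ring
    simp only [h2] at h
    rw [MeasureTheory.integral_const_mul, smul_eq_mul] at h
    have := mul_left_cancel₀ (inv_ne_zero hs.ne') h
    exact this.symm
  have hmain : Tendsto (fun s : ℝ => ∫ u in Set.Ioi (0:ℝ), F (s * u) * g u)
      atTop (nhds 1) := by
    have hDCT := MeasureTheory.tendsto_integral_filter_of_dominated_convergence
      (μ := volume.restrict (Set.Ioi (0:ℝ))) (l := atTop)
      (F := fun (s : ℝ) u => F (s * u) * g u) (f := g) (bound := g)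
      ?_ ?_ hgint ?_
    · rwa [hgint1] at hDCT
    · refine Filter.Eventually.of_forall fun s => ?_
      exact ((hFcont.comp (continuous_const.mul continuous_id)).mul hgcont).aestronglyMeasurable
    · filter_upwards [eventually_ge_atTop (0:ℝ)] with s hs
      refine (ae_restrict_iff' measurableSet_Ioi).2 (Filter.Eventually.of_forall fun u hu => ?_)
      have hsu : 0 ≤ s * u := mul_nonneg hs (le_of_lt hu)
      have hgu := hgnn u (le_of_lt hu)
      rw [Real.norm_eq_abs, abs_mul, abs_of_nonneg (hF0 _ hsu), abs_of_nonneg hgu]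
      calc F (s * u) * g u ≤ 1 * g u := mul_le_mul_of_nonneg_right (hF1 _ hsu) hgu
        _ = g u := one_mul _
    · refine (ae_restrict_iff' measurableSet_Ioi).2 (Filter.Eventually.of_forall fun u hu => ?_)
      have hsu : Tendsto (fun s : ℝ => s * u) atTop atTop :=
        Tendsto.atTop_mul_const hu tendsto_id
      have := (hFlim.comp hsu).mul_const (g u)
      rw [one_mul] at this
      exact this
  refine hmain.congr' ?_
  filter_upwards [eventually_gt_atTop (0:ℝ)] with s hs
  exact (hsub s hs).symm
end
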